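/- Let s be a nonzero integer, n ≥ 2, and set M_n* = u_1·u_2⋯u_n, where u_i is Sylvester's sequence. If gcd(s, M_n*) = 1, then the cyclic system of n simultaneous congruences (∏_{k=1}^n q_k)/q_i ≡ s (mod |q_i|) for 1 ≤ i ≤ n has infinitely many solutions in nonzero integers (q_1, …, q_n) satisfying gcd(q_1·q_2⋯q_n, s) = 1 and min_i |q_i| ≥ 2. -/

import Mathlib

open Finset

/-- Auxiliary pair `(w k, Q k)` where `w 0 = x`, `w (k+1) = 1 - w 0 ⋯ w k` and
`Q k = w 0 ⋯ w k`. -/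
private def sylWQ (x : ℤ) : ℕ → ℤ × ℤ
  | 0 => (x, x)
  | k + 1 => (1 - (sylWQ x k).2, (sylWQ x k).2 * (1 - (sylWQ x k).2))

private def sylW (x : ℤ) (k : ℕ) : ℤ := (sylWQ x k).1
private def sylQ (x : ℤ) (k : ℕ) : ℤ := (sylWQ x k).2

private lemma sylW_zero (x : ℤ) : sylW x 0 = x := rfl
private lemma sylQ_zero (x : ℤ) : sylQ x 0 = x := rfl
private lemma sylW_succ (x : ℤ) (k : ℕ) : sylW x (k + 1) = 1 - sylQ x k := rfl
private lemma sylQ_succ (x : ℤ) (k : ℕ) :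
    sylQ x (k + 1) = sylQ x k * (1 - sylQ x k) := rfl

private lemma sylQ_eq_prod (x : ℤ) (k : ℕ) :
    sylQ x k = ∏ i ∈ range (k + 1), sylW x i := by
  induction k with
  | zero => simp [sylQ_zero, sylW_zero]
  | succ k ih => rw [prod_range_succ, ← ih, sylQ_succ, sylW_succ]

private lemma sylW_dvd_sylQ (x : ℤ) {t k : ℕ} (h : t ≤ k) : sylW x t ∣ sylQ x k := by
  rw [sylQ_eq_prod]
  exact dvd_prod_of_mem _ (mem_range.mpr (by omega))

private lemma sylW_dvd_prod_erase (x : ℤ) {t m : ℕ} (h : t < m) :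
    sylW x t ∣ (∏ k ∈ (range m).erase t, sylW x k) - 1 := by
  induction m with
  | zero => omega
  | succ m ih =>
    rcases Nat.lt_or_ge t m with hm | hm
    · rw [range_add_one, erase_insert_of_ne (by omega : m ≠ t),
        prod_insert (by simp)]
      have hwm : sylW x t ∣ sylW x m - 1 := by
        obtain ⟨r, rfl⟩ : ∃ r, m = r + 1 := ⟨m - 1, by omega⟩
        rw [sylW_succ, show (1 - sylQ x r) - 1 = -(sylQ x r) by ring]
        exact (sylW_dvd_sylQ x (show t ≤ r by omega)).neg_right
      have hih := ih hm
      have : sylW x m * (∏ k ∈ (range m).erase t, sylW x k) - 1 =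
          (sylW x m - 1) * (∏ k ∈ (range m).erase t, sylW x k) +
          ((∏ k ∈ (range m).erase t, sylW x k) - 1) := by ring
      rw [this]
      exact dvd_add (hwm.mul_right _) hih
    · have htm : t = m := by omega
      subst htm
      rw [range_add_one, erase_insert (by simp)]
      rcases Nat.eq_zero_or_pos t with rfl | ht
      · simp
      · obtain ⟨r, rfl⟩ : ∃ r, t = r + 1 := ⟨t - 1, by omega⟩
        rw [← sylQ_eq_prod]
        exact ⟨-1, by rw [sylW_succ]; ring⟩

private lemma sylW_bound (x : ℤ) (hx : 3 ≤ x) (k : ℕ) :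
    2 ≤ |sylW x k| ∧ x ≤ |sylQ x k| := by
  induction k with
  | zero =>
    constructor
    · rw [sylW_zero, abs_of_nonneg (by omega)]; omega
    · rw [sylQ_zero, abs_of_nonneg (by omega)]
  | succ k ih =>
    obtain ⟨h1, h2⟩ := ih
    have hw : 2 ≤ |sylW x (k + 1)| := by
      rw [sylW_succ]
      have h := abs_sub_abs_le_abs_sub (sylQ x k) (1 : ℤ)
      rw [abs_one, abs_sub_comm] at h
      linarith
    refine ⟨hw, ?_⟩
    rw [sylQ_succ, ← sylW_succ, abs_mul]
    nlinarith [abs_nonneg (sylQ x k)]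

/-- If `gcd(s, u_1 u_2 ⋯ u_n) = 1` where `u` is Sylvester's
sequence (`u 1 = 2`, `u (k+1) = u 1 ⋯ u k + 1`), then the cyclic system of
congruences `(∏ q_k)/q_i ≡ s (mod |q_i|)` has infinitely many integer
solutions with `gcd(q_1 ⋯ q_n, s) = 1` and all `|q_i| ≥ 2`. -/
theorem cyclic_congruence_r_eq_one_infinite_min_ge_two
    (s : ℤ) (hs : s ≠ 0) (n : ℕ) (hn : 2 ≤ n)
    (u : ℕ → ℤ) (hu1 : u 1 = 2)
    (hu : ∀ k, 1 ≤ k → u (k + 1) = (∏ i ∈ Finset.Icc 1 k, u i) + 1)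
    (hgcd : Int.gcd s (∏ i ∈ Finset.Icc 1 n, u i) = 1) :
    {q : Fin n → ℤ |
        (∀ i, 2 ≤ |q i|) ∧
        (∀ i, q i ∣ (∏ k ∈ Finset.univ.erase i, q k) - s) ∧
        Int.gcd (∏ i, q i) s = 1}.Infinite := by
  classical
  have huP : ∀ k, u (k + 1) = (∏ i ∈ Finset.Icc 1 k, u i) + 1 := by
    intro k
    rcases Nat.eq_zero_or_pos k with rfl | hk
    · simpa using hu1
    · exact hu k hk
  set N := n - 1 with hNdef
  have hnN : n = N + 1 := by omega
  have hN1 : 1 ≤ N := by omega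
  set A : ℤ := (s.natAbs : ℤ) with hAdef
  have hA1 : 1 ≤ A := by
    have := Int.natAbs_pos.mpr hs
    omega
  have hsA : s ∣ A := Int.dvd_natAbs.mpr dvd_rfl
  have habsA : |s| = A := Int.abs_eq_natAbs s
  set X : ℕ → ℤ := fun m => A * ((m : ℤ) + A + 4) - 1 with hXdef
  have hXA : ∀ m, A + 3 ≤ X m := by
    intro m
    have hm : (0 : ℤ) ≤ (m : ℤ) := Int.natCast_nonneg m
    have : (m : ℤ) + A + 4 ≤ A * ((m : ℤ) + A + 4) := by nlinarith
    simp only [hXdef]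
    linarith
  have hX3 : ∀ m, 3 ≤ X m := fun m => by have := hXA m; linarith
  have hXmod : ∀ m, s ∣ X m + 1 := by
    intro m
    have : X m + 1 = A * ((m : ℤ) + A + 4) := by simp [hXdef]
    rw [this]
    exact hsA.mul_right _
  set F : ℕ → Fin n → ℤ := fun m i =>
    if (i : ℕ) = N then s - sylQ (X m) (N - 1) else sylW (X m) (i : ℕ) with hFdef
  apply Set.infinite_of_injective_forall_mem (f := F)
  · -- injectivity
    intro m1 m2 h
    have h0 : F m1 ⟨0, by omega⟩ = F m2 ⟨0, by omega⟩ := by rw [h]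
    simp only [hFdef] at h0
    rw [if_neg (show ¬(((⟨0, by omega⟩ : Fin n) : ℕ) = N) by simp; omega),
      if_neg (show ¬(((⟨0, by omega⟩ : Fin n) : ℕ) = N) by simp; omega)] at h0
    have hx : X m1 = X m2 := h0
    simp only [hXdef] at hx
    have hA0 : A ≠ 0 := by omega
    have h2 : (m1 : ℤ) + A + 4 = (m2 : ℤ) + A + 4 := by
      apply mul_left_cancel₀ hA0
      linarith
    have : (m1 : ℤ) = m2 := by linarith
    exact_mod_cast this
  · -- membership
    intro m
    set x := X m with hxdef
    have hx3 : 3 ≤ x := hX3 m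
    set Qq : ℕ → ℤ := fun t => if t = N then s - sylQ x (N - 1) else sylW x t with hQqdef
    have hFQ : ∀ i : Fin n, F m i = Qq (i : ℕ) := fun i => rfl
    have himg : ∀ i : Fin n, (Finset.univ.erase i).image (Fin.val) = (range n).erase (i : ℕ) := by
      intro i
      ext t
      simp only [mem_image, mem_erase, mem_univ, and_true, mem_range]
      constructor
      · rintro ⟨k, hk, rfl⟩
        exact ⟨fun h => hk (Fin.ext h), k.isLt⟩
      · rintro ⟨hne, hlt⟩
        exact ⟨⟨t, hlt⟩, fun h => hne (by simpa using congrArg Fin.val h), rfl⟩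
    have hconv : ∀ i : Fin n,
        ∏ k ∈ Finset.univ.erase i, F m k = ∏ t ∈ (range n).erase (i : ℕ), Qq t := by
      intro i
      rw [← himg i, prod_image (fun a _ b _ hab => Fin.val_injective hab)]
    have hQqN : Qq N = s - sylQ x (N - 1) := if_pos rfl
    have hQqW : forall t, t ≠ N → Qq t = sylW x t := fun t ht => if_neg ht
    have hQvProd : sylQ x (N - 1) = ∏ t ∈ range N, sylW x t := by
      rw [sylQ_eq_prod, show N - 1 + 1 = N by omega]
    have hprodN : ∏ t ∈ range N, Qq t = sylQ x (N - 1) := by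
      rw [hQvProd]
      exact prod_congr rfl fun t ht => hQqW t (by simp at ht; omega)
    have hQb : x ≤ |sylQ x (N - 1)| := (sylW_bound x hx3 (N - 1)).2
    refine ⟨?_, ?_, ?_⟩
    · -- abs bounds
      intro i
      rw [hFQ i]
      by_cases hi : (i : ℕ) = N
      · rw [hi, hQqN]
        have h := abs_sub_abs_le_abs_sub (sylQ x (N - 1)) s
        rw [abs_sub_comm] at h
        have := hXA m
        rw [habsA] at h
        linarith
      · rw [hQqW _ hi]
        exact (sylW_bound x hx3 _).1
    · -- divisibility
      intro i
      rw [hFQ i, hconv i]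
      by_cases hi : (i : ℕ) = N
      · rw [hi, hQqN, hnN, range_add_one, erase_insert (by simp), hprodN]
        exact ⟨-1, by ring⟩
      · rw [hQqW _ hi]
        have hilt : (i : ℕ) < N := by have := i.isLt; omega
        generalize hti : (i : ℕ) = ti at hilt hi ⊢
        rw [hnN, range_add_one, erase_insert_of_ne (by omega : N ≠ ti),
          prod_insert (by simp)]
        have hrest : ∏ t ∈ (range N).erase ti, Qq t
            = ∏ t ∈ (range N).erase ti, sylW x t := by
          exact prod_congr rfl fun t ht => hQqW t (by simp at ht; omega)
        rw [hQqN, hrest]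
        obtain ⟨a, ha⟩ := sylW_dvd_prod_erase x hilt
        obtain ⟨b, hb⟩ := sylW_dvd_sylQ x (show ti ≤ N - 1 by omega)
        refine ⟨s * a - b - sylW x ti * a * b, ?_⟩
        have hP : ∏ t ∈ (range N).erase ti, sylW x t = sylW x ti * a + 1 := by
          linarith
        rw [hP, hb]
        ring
    · -- gcd condition
      have hprodall : ∏ i, F m i = sylQ x (N - 1) * (s - sylQ x (N - 1)) := by
        have h1 : ∏ i, F m i = ∏ t ∈ range n, Qq t := by
          rw [← Fin.prod_univ_eq_prod_range]
        rw [h1, hnN, prod_range_succ, hprodN, hQqN]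
      have hQu : ∀ k, s ∣ sylQ x k + ∏ i ∈ Finset.Icc 1 k, u i := by
        intro k
        induction k with
        | zero =>
          have h0 : (Finset.Icc 1 0 : Finset ℕ) = ∅ := by simp
          rw [h0, prod_empty, sylQ_zero]
          exact hXmod m
        | succ k ih =>
          rw [sylQ_succ, Finset.prod_Icc_succ_top (by omega : 1 ≤ k + 1), huP k]
          obtain ⟨c, hc⟩ := ih
          refine ⟨c * (1 + (∏ i ∈ Finset.Icc 1 k, u i) - sylQ x k), ?_⟩
          linear_combination (1 + (∏ i ∈ Finset.Icc 1 k, u i) - sylQ x k) * hc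
      have hcopP : IsCoprime s (∏ i ∈ Finset.Icc 1 (N - 1), u i) := by
        refine IsCoprime.of_isCoprime_of_dvd_right
          (Int.isCoprime_iff_gcd_eq_one.mpr hgcd) ?_
        exact prod_dvd_prod_of_subset _ _ _ (Finset.Icc_subset_Icc_right (by omega))
      have hcopQ : IsCoprime s (sylQ x (N - 1)) := by
        obtain ⟨c, hc⟩ := hQu (N - 1)
        have heq : sylQ x (N - 1) = -(∏ i ∈ Finset.Icc 1 (N - 1), u i) + s * c := by
          linarith
        rw [heq]
        exact hcopP.neg_right.add_mul_left_right c
      have hcopQ2 : IsCoprime s (s - sylQ x (N - 1)) := by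
        rw [show s - sylQ x (N - 1) = -(sylQ x (N - 1)) + s * 1 by ring]
        exact hcopQ.neg_right.add_mul_left_right 1
      rw [hprodall]
      exact Int.isCoprime_iff_gcd_eq_one.mp (hcopQ.mul_right hcopQ2).symm
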